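/- Let d, r', r'' be positive integers, k ∈ ℤ_{++}^{r'}, l ∈ ℤ_{++}^{r''}, and let R be the unique polynomial in ℂ[X] with R · ∏_{i=1}^{r'+1}∏_{j=1}^{r''+1}(X − d(i+j−2)/2)_{k_i+l_j} = (X)_{φ₀(k,l),d} · ∏_{i=1}^{r'}∏_{j=1}^{r''}(X − d(i+j−1)/2)_{k_i+l_j}. Suppose 1 ≤ m₁' ≤ m₂' ≤ r', 1 ≤ m₁'' ≤ m₂'' ≤ r'', k₁ = ⋯ = k_{m₁'}, l₁ = ⋯ = l_{m₁''}, and k_{m₂'+1} = l_{m₂''+1} = 0 (conventions k_{r'+1} = l_{r''+1} = 0). Then: (i) if k₁ ≥ 1 and l₁ ≥ 1, every zero λ ∈ ℂ of R is real and satisfies (d/2)·max{m₁', m₁''} − (k₁+l₁) + 1 ≤ λ ≤ (d/2)(m₂'+m₂''−1) − max{k_{m₂'}, l_{m₂''}}; (ii) if k₁ = 0 or l₁ = 0, then R is the constant polynomial 1. Moreover, for m = 1, …, r'+r''−1, if φ₀(k,l)_{m+1} = 0 and φ₀(k,l)_m ≠ 0, then at λ = dm/2 the numerator ∏_{i=1}^{r'}∏_{j=1}^{r''}(λ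 − d(i+j−1)/2)_{k_i+l_j} and the denominator ∏_{i=1}^{r'+1}∏_{j=1}^{r''+1}(λ − d(i+j−2)/2)_{k_i+l_j} of C₀^d vanish to the same order (so C₀^d is nonzero holomorphic there), while at λ = d(m−1)/2 the denominator vanishes to strictly higher order than the numerator (so C₀^d has a pole there). -/

import Mathlib

open Polynomial Finset

/-- `(X - c)_m := ∏_{t=0}^{m-1} (X - c + t)` in `ℂ[X]`. -/
noncomputable def pochPoly (c : ℂ) (m : ℕ) : Polynomial ℂ :=
  ∏ t ∈ Finset.range m, (Polynomial.X - Polynomial.C c + (t : Polynomial ℂ))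

/-- `φ₀(k,l)_a := min{k_i + l_j : 1 ≤ i ≤ r'+1, 1 ≤ j ≤ r''+1, i+j = a+1}`. -/
noncomputable def phi0 (r' r'' : ℕ) (k l : ℕ → ℕ) (a : ℕ) : ℕ :=
  sInf {m : ℕ | ∃ i j : ℕ, 1 ≤ i ∧ i ≤ r' + 1 ∧ 1 ≤ j ∧ j ≤ r'' + 1 ∧
    i + j = a + 1 ∧ m = k i + l j}

/-- The denominator `∏_{i=1}^{r'+1}∏_{j=1}^{r''+1}(X − d(i+j−2)/2)_{k_i+l_j}` of `C₀^d`. -/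
noncomputable def denom0 (d r' r'' : ℕ) (k l : ℕ → ℕ) : Polynomial ℂ :=
  ∏ i ∈ Finset.Icc 1 (r' + 1), ∏ j ∈ Finset.Icc 1 (r'' + 1),
    pochPoly ((d : ℂ) * ((i : ℂ) + (j : ℂ) - 2) / 2) (k i + l j)

/-- The numerator `∏_{i=1}^{r'}∏_{j=1}^{r''}(X − d(i+j−1)/2)_{k_i+l_j}` of `C₀^d`. -/
noncomputable def numer0 (d r' r'' : ℕ) (k l : ℕ → ℕ) : Polynomial ℂ :=
  ∏ i ∈ Finset.Icc 1 r', ∏ j ∈ Finset.Icc 1 r'',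
    pochPoly ((d : ℂ) * ((i : ℂ) + (j : ℂ) - 1) / 2) (k i + l j)

/-- The polynomial `(X)_{φ₀(k,l),d} = ∏_{a=1}^{r'+r''}(X − d(a−1)/2)_{φ₀(k,l)_a}`. -/
noncomputable def phiPoly0 (d r' r'' : ℕ) (k l : ℕ → ℕ) : Polynomial ℂ :=
  ∏ a ∈ Finset.Icc 1 (r' + r''),
    pochPoly ((d : ℂ) * ((a : ℂ) - 1) / 2) (phi0 r' r'' k l a)

section ZeroesNonsimpleAux

/-- counting function -/
noncomputable def cnt (z c : ℂ) (w : ℕ) : ℕ :=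
  ∑ t ∈ Finset.range w, if z = c - (t : ℂ) then 1 else 0

lemma pochPoly_eq (c : ℂ) (m : ℕ) :
    pochPoly c m = ∏ t ∈ Finset.range m, (X - C (c - (t : ℂ))) := by
  unfold pochPoly
  refine Finset.prod_congr rfl fun t _ => ?_
  have : ((t : ℕ) : Polynomial ℂ) = C ((t : ℕ) : ℂ) := by
    simp
  rw [this, map_sub]
  ring

lemma pochPoly_monic (c : ℂ) (m : ℕ) : (pochPoly c m).Monic := by
  rw [pochPoly_eq]
  exact monic_prod_of_monic _ _ fun t _ => monic_X_sub_C _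

lemma pochPoly_ne_zero (c : ℂ) (m : ℕ) : pochPoly c m ≠ 0 :=
  (pochPoly_monic c m).ne_zero

lemma rootMult_prod {α : Type*} (s : Finset α) (f : α → Polynomial ℂ)
    (hf : ∀ i ∈ s, f i ≠ 0) (z : ℂ) :
    rootMultiplicity z (∏ i ∈ s, f i) = ∑ i ∈ s, rootMultiplicity z (f i) := by
  classical
  induction s using Finset.cons_induction with
  | empty => rw [Finset.prod_empty, Finset.sum_empty, ← C_1, rootMultiplicity_C]
  | cons a s ha ih =>
      rw [Finset.prod_cons, Finset.sum_cons,
        Polynomial.rootMultiplicity_mul, ih (fun i hi => hf i (Finset.mem_cons_of_mem hi))]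
      exact mul_ne_zero (hf a (Finset.mem_cons_self a s))
        (Finset.prod_ne_zero_iff.mpr fun i hi => hf i (Finset.mem_cons_of_mem hi))

lemma rootMult_pochPoly (z c : ℂ) (w : ℕ) :
    rootMultiplicity z (pochPoly c w) = cnt z c w := by
  classical
  rw [pochPoly_eq, rootMult_prod _ _ (fun t _ => X_sub_C_ne_zero _)]
  unfold cnt
  refine Finset.sum_congr rfl fun t _ => ?_
  rw [rootMultiplicity_X_sub_C]

lemma cnt_zero (z c : ℂ) : cnt z c 0 = 0 := by simp [cnt]

lemma cnt_le_one (z c : ℂ) (w : ℕ) : cnt z c w ≤ 1 := by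
  unfold cnt
  rcases em (∃ t ∈ Finset.range w, z = c - (t:ℂ)) with ⟨t0, ht0, hz⟩ | h
  · have : ∀ t ∈ Finset.range w, (if z = c - (t:ℂ) then 1 else 0) = if t = t0 then 1 else 0 := by
      intro t _
      by_cases h1 : z = c - (t:ℂ)
      · have h2 : c - (t0:ℂ) = c - (t:ℂ) := hz ▸ h1
        have : (t:ℂ) = (t0:ℂ) := by linear_combination h2
        simp [h1, Nat.cast_injective this]
      · have : t ≠ t0 := fun he => h1 (he ▸ hz)
        simp [h1, this]
    rw [Finset.sum_congr rfl this, Finset.sum_ite_eq' _ t0, if_pos ht0]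
  · push_neg at h
    have : ∀ t ∈ Finset.range w, (if z = c - (t:ℂ) then 1 else 0) = 0 := fun t ht => by
      simp [h t ht]
    rw [Finset.sum_congr rfl this]; simp

lemma cnt_pos (z c : ℂ) (w : ℕ) (h : 0 < cnt z c w) : ∃ t : ℕ, t < w ∧ z = c - (t:ℂ) := by
  unfold cnt at h
  by_contra hc
  push_neg at hc
  have : ∀ t ∈ Finset.range w, (if z = c - (t:ℂ) then 1 else 0) = 0 := by
    intro t ht
    rw [Finset.mem_range] at ht
    simp [hc t ht]
  rw [Finset.sum_congr rfl this] at h; simp at h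

lemma cnt_eq_ite (c : ℂ) (t w : ℕ) :
    cnt (c - (t:ℂ)) c w = if t < w then 1 else 0 := by
  unfold cnt
  have key : ∀ u ∈ Finset.range w, (if c - (t:ℂ) = c - (u:ℂ) then 1 else 0) = if u = t then 1 else 0 := by
    intro u _
    by_cases h : c - (t:ℂ) = c - (u:ℂ)
    · have : (u:ℂ) = (t:ℂ) := by linear_combination h
      simp [h, Nat.cast_injective this]
    · have : u ≠ t := fun he => h (by rw [he])
      simp [h, this]
  rw [Finset.sum_congr rfl key, Finset.sum_ite_eq' _ t]
  simp [Finset.mem_range]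

lemma cnt_self (c : ℂ) (w : ℕ) (hw : 0 < w) : cnt c c w = 1 := by
  have := cnt_eq_ite c 0 w
  simpa [hw] using this

/-- shift a sum over `Icc` by one -/
lemma sum_Icc_shift {M : Type*} [AddCommMonoid M] (f : ℕ → M) (a b : ℕ) :
    ∑ i ∈ Icc a b, f (i+1) = ∑ i ∈ Icc (a+1) (b+1), f i := by
  have e1 : Icc a b = Ico a (b+1) := by
    ext x; simp only [Finset.mem_Icc, Finset.mem_Ico]; omega
  have e2 : Icc (a+1) (b+1) = Ico (a+1) (b+2) := by
    ext x; simp only [Finset.mem_Icc, Finset.mem_Ico]; omega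
  rw [e1, e2, Finset.sum_Ico_eq_sum_range, Finset.sum_Ico_eq_sum_range]
  have e3 : b + 1 - a = b + 2 - (a+1) := by omega
  rw [← e3]
  refine Finset.sum_congr rfl fun i _ => ?_
  congr 1
  omega

/-- split a sum over `Icc a b` at an interior point `p` (needs `1 ≤ a`). -/
lemma sum_Icc_split {M : Type*} [AddCommMonoid M] (f : ℕ → M) (a b p : ℕ)
    (ha : 1 ≤ a) (h1 : a ≤ p) (h2 : p ≤ b) :
    ∑ i ∈ Icc a b, f i = (∑ i ∈ Icc a (p-1), f i) + (f p + ∑ i ∈ Icc (p+1) b, f i) := by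
  have e1 : Icc a (p-1) = Ico a p := by
    ext x; simp only [Finset.mem_Icc, Finset.mem_Ico]; omega
  have e2 : Icc (p+1) b = Ico (p+1) (b+1) := by
    ext x; simp only [Finset.mem_Icc, Finset.mem_Ico]; omega
  have e3 : Icc a b = Ico a (b+1) := by
    ext x; simp only [Finset.mem_Icc, Finset.mem_Ico]; omega
  rw [e1, e2, e3]
  rw [← Finset.sum_Ico_consecutive f (by omega : a ≤ p) (by omega : p ≤ b+1)]
  congr 1
  rw [← Finset.sum_Ico_consecutive f (by omega : p ≤ p+1) (by omega : p+1 ≤ b+1)]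
  congr 1
  rw [Finset.sum_Ico_succ_top (by omega : p ≤ p), Finset.Ico_self, Finset.sum_empty, zero_add]

/-- Key witness-extraction lemma. -/
lemma witness_lemma {a b t : ℕ} (dd nn : ℕ → ℕ) (ha : 1 ≤ a)
    (hAB : (∑ i ∈ Icc a b, if t < dd i then 1 else 0) <
           ∑ i ∈ Icc a (b-1), if t < nn i then (1:ℕ) else 0) :
    ∃ i₁ i₂, a ≤ i₁ ∧ i₁ ≤ i₂ ∧ i₂ ≤ b - 1 ∧
      dd i₁ ≤ t ∧ t < nn i₁ ∧ dd (i₂+1) ≤ t ∧ t < nn i₂ := by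
  classical
  by_contra hcon
  push_neg at hcon
  -- set of δ-witnesses
  set P : Finset ℕ := (Icc a (b-1)).filter (fun i => dd i ≤ t ∧ t < nn i) with hP
  rcases P.eq_empty_or_nonempty with hPe | hPne
  · -- no δ-witness at all: termwise comparison
    have : ∀ i ∈ Icc a (b-1), (if t < nn i then (1:ℕ) else 0) ≤ if t < dd i then 1 else 0 := by
      intro i hi
      by_cases h1 : t < nn i
      · by_cases h2 : t < dd i
        · simp [h1, h2]
        · exfalso
          have : i ∈ P := by
            rw [hP, Finset.mem_filter]; exact ⟨hi, by omega, h1⟩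
          rw [hPe] at this; simp at this
      · simp [h1]
    have h3 : (∑ i ∈ Icc a (b-1), if t < nn i then (1:ℕ) else 0)
        ≤ ∑ i ∈ Icc a (b-1), if t < dd i then 1 else 0 := Finset.sum_le_sum this
    have h4 : (∑ i ∈ Icc a (b-1), if t < dd i then (1:ℕ) else 0)
        ≤ ∑ i ∈ Icc a b, if t < dd i then 1 else 0 := by
      apply Finset.sum_le_sum_of_subset
      intro x; simp only [Finset.mem_Icc]; omega
    omega
  · set p := P.min' hPne with hp
    have hpP : p ∈ P := P.min'_mem hPne
    rw [hP, Finset.mem_filter, Finset.mem_Icc] at hpP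
    obtain ⟨⟨hap, hpb⟩, hdp, hnp⟩ := hpP
    -- for i < p : not a δ-witness
    have hlow : ∀ i ∈ Icc a (p-1), (if t < nn i then (1:ℕ) else 0) ≤ if t < dd i then 1 else 0 := by
      intro i hi
      rw [Finset.mem_Icc] at hi
      by_cases h1 : t < nn i
      · by_cases h2 : t < dd i
        · simp [h1, h2]
        · exfalso
          have hiP : i ∈ P := by
            rw [hP, Finset.mem_filter, Finset.mem_Icc]
            exact ⟨⟨hi.1, by omega⟩, by omega, h1⟩
          have := Finset.min'_le P i hiP
          omega
      · simp [h1]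
    -- for i ≥ p : not a γ-witness
    have hhigh : ∀ i ∈ Icc p (b-1), (if t < nn i then (1:ℕ) else 0) ≤ if t < dd (i+1) then 1 else 0 := by
      intro i hi
      rw [Finset.mem_Icc] at hi
      by_cases h1 : t < nn i
      · by_cases h2 : t < dd (i+1)
        · simp [h1, h2]
        · exfalso
          exact absurd (hcon p i hap hi.1 hi.2 hdp hnp (by omega)) (by omega)
      · simp [h1]
    have hsplitN : (∑ i ∈ Icc a (b-1), if t < nn i then (1:ℕ) else 0)
        = (∑ i ∈ Icc a (p-1), if t < nn i then (1:ℕ) else 0) + ((if t < nn p then (1:ℕ) else 0)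
          + ∑ i ∈ Icc (p+1) (b-1), if t < nn i then (1:ℕ) else 0) :=
      sum_Icc_split _ a (b-1) p ha hap hpb
  -- compare piecewise
    have c1 : (∑ i ∈ Icc a (p-1), if t < nn i then (1:ℕ) else 0)
        ≤ ∑ i ∈ Icc a (p-1), if t < dd i then 1 else 0 := Finset.sum_le_sum hlow
    have c2 : ((if t < nn p then (1:ℕ) else 0) + ∑ i ∈ Icc (p+1) (b-1), if t < nn i then (1:ℕ) else 0)
        ≤ ∑ i ∈ Icc p (b-1), if t < dd (i+1) then 1 else 0 := by
      have : (∑ i ∈ Icc p (b-1), if t < nn i then (1:ℕ) else 0)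
          ≤ ∑ i ∈ Icc p (b-1), if t < dd (i+1) then 1 else 0 := Finset.sum_le_sum hhigh
      have hsp : (∑ i ∈ Icc p (b-1), if t < nn i then (1:ℕ) else 0)
          = (∑ i ∈ Icc p (p-1), if t < nn i then (1:ℕ) else 0) + ((if t < nn p then (1:ℕ) else 0)
            + ∑ i ∈ Icc (p+1) (b-1), if t < nn i then (1:ℕ) else 0) :=
        sum_Icc_split _ p (b-1) p (by omega) le_rfl hpb
      have : (∑ i ∈ Icc p (p-1), if t < nn i then (1:ℕ) else 0) = 0 := by
        rw [Finset.Icc_eq_empty (by omega), Finset.sum_empty]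
      omega
    have c3 : (∑ i ∈ Icc p (b-1), if t < dd (i+1) then (1:ℕ) else 0)
        = ∑ i ∈ Icc (p+1) b, if t < dd i then (1:ℕ) else 0 := by
      rw [sum_Icc_shift (fun i => if t < dd i then (1:ℕ) else 0) p (b-1)]
      congr 1
      congr 1
      omega
    have c4 : (∑ i ∈ Icc a (p-1), if t < dd i then (1:ℕ) else 0)
          + (∑ i ∈ Icc (p+1) b, if t < dd i then (1:ℕ) else 0)
        ≤ ∑ i ∈ Icc a b, if t < dd i then (1:ℕ) else 0 := by
      have hsplitD : (∑ i ∈ Icc a b, if t < dd i then (1:ℕ) else 0)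
          = (∑ i ∈ Icc a (p-1), if t < dd i then (1:ℕ) else 0) + ((if t < dd p then (1:ℕ) else 0)
            + ∑ i ∈ Icc (p+1) b, if t < dd i then (1:ℕ) else 0) :=
        sum_Icc_split _ a b p ha hap (by omega)
      omega
    omega

/-- reorganize a double sum over a rectangle into sums along antidiagonals `i+j+c = q`. -/
lemma diag_sum {M : Type*} [AddCommMonoid M] (I J c : ℕ) (F : ℕ → ℕ → M) (Q : Finset ℕ)
    (hQ : ∀ i j, 1 ≤ i → i ≤ I → 1 ≤ j → j ≤ J → i + j + c ∈ Q) :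
    ∑ i ∈ Icc 1 I, ∑ j ∈ Icc 1 J, F i j
      = ∑ q ∈ Q, ∑ i ∈ Icc (max 1 (q - c - J)) (min (q - c - 1) I), F i (q - c - i) := by
  classical
  rw [← Finset.sum_product']
  rw [← Finset.sum_fiberwise_of_maps_to (g := fun p : ℕ × ℕ => p.1 + p.2 + c)
      (t := Q) ?_ (fun p => F p.1 p.2)]
  · refine Finset.sum_congr rfl fun q hq => ?_
    refine Finset.sum_nbij' (i := fun p => p.1) (j := fun i => (i, q - c - i)) ?_ ?_ ?_ ?_ ?_
    · intro p hp
      simp only [Finset.mem_filter, Finset.mem_product, Finset.mem_Icc] at hp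
      simp only [Finset.mem_Icc]
      omega
    · intro i hi
      simp only [Finset.mem_Icc] at hi
      simp only [Finset.mem_filter, Finset.mem_product, Finset.mem_Icc]
      omega
    · intro p hp
      simp only [Finset.mem_filter, Finset.mem_product, Finset.mem_Icc] at hp
      have : q - c - p.1 = p.2 := by omega
      simp [this]
    · intro i hi
      rfl
    · intro p hp
      simp only [Finset.mem_filter, Finset.mem_product, Finset.mem_Icc] at hp
      have : q - c - p.1 = p.2 := by omega
      rw [this]
  · intro p hp
    simp only [Finset.mem_product, Finset.mem_Icc] at hp
    exact hQ p.1 p.2 hp.1.1 hp.1.2 hp.2.1 hp.2.2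

lemma phi0_le (r' r'' : ℕ) (k l : ℕ → ℕ) (a i j : ℕ) (h1 : 1 ≤ i) (h2 : i ≤ r'+1)
    (h3 : 1 ≤ j) (h4 : j ≤ r''+1) (h5 : i + j = a + 1) :
    phi0 r' r'' k l a ≤ k i + l j :=
  Nat.sInf_le ⟨i, j, h1, h2, h3, h4, h5, rfl⟩

lemma phi0_top (r' r'' : ℕ) (k l : ℕ → ℕ) (hk0 : k (r'+1) = 0) (hl0 : l (r''+1) = 0) :
    phi0 r' r'' k l (r' + r'' + 1) = 0 := by
  have h := phi0_le r' r'' k l (r'+r''+1) (r'+1) (r''+1) (by omega) le_rfl (by omega) le_rfl (by omega)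
  omega

lemma phi0_zero_witness (r' r'' : ℕ) (k l : ℕ → ℕ) (a : ℕ) (ha : 1 ≤ a) (ha2 : a ≤ r' + r'')
    (h : phi0 r' r'' k l a = 0) :
    ∃ i j : ℕ, 1 ≤ i ∧ i ≤ r' + 1 ∧ 1 ≤ j ∧ j ≤ r'' + 1 ∧ i + j = a + 1 ∧ k i = 0 ∧ l j = 0 := by
  have hne : {m : ℕ | ∃ i j : ℕ, 1 ≤ i ∧ i ≤ r' + 1 ∧ 1 ≤ j ∧ j ≤ r'' + 1 ∧
      i + j = a + 1 ∧ m = k i + l j}.Nonempty := by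
    refine ⟨k (max 1 (a - r'')) + l (a + 1 - max 1 (a - r'')), max 1 (a - r''), a + 1 - max 1 (a - r''), ?_, ?_, ?_, ?_, ?_, rfl⟩ <;> omega
  have h0 : 0 ∈ {m : ℕ | ∃ i j : ℕ, 1 ≤ i ∧ i ≤ r' + 1 ∧ 1 ≤ j ∧ j ≤ r'' + 1 ∧
      i + j = a + 1 ∧ m = k i + l j} := by
    rw [← h]
    exact Nat.sInf_mem hne
  obtain ⟨i, j, h1, h2, h3, h4, h5, h6⟩ := h0
  exact ⟨i, j, h1, h2, h3, h4, h5, by omega, by omega⟩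

lemma sum_pos_witness {s : Finset ℕ} {f : ℕ → ℕ} (h : 0 < ∑ i ∈ s, f i) :
    ∃ i ∈ s, 0 < f i := by
  by_contra hc
  push_neg at hc
  have : ∑ i ∈ s, f i = 0 := Finset.sum_eq_zero fun i hi => by have := hc i hi; omega
  omega

lemma core_diag (d r' r'' : ℕ) (k l : ℕ → ℕ)
    (hk : ∀ i j, 1 ≤ i → i ≤ j → j ≤ r' → k j ≤ k i) (hk0 : k (r' + 1) = 0)
    (hl : ∀ i j, 1 ≤ i → i ≤ j → j ≤ r'' → l j ≤ l i) (hl0 : l (r'' + 1) = 0)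
    (m₁' m₂' m₁'' m₂'' : ℕ)
    (hm1' : 1 ≤ m₁') (hm2' : m₁' ≤ m₂') (hm3' : m₂' ≤ r')
    (hm1'' : 1 ≤ m₁'') (hm2'' : m₁'' ≤ m₂'') (hm3'' : m₂'' ≤ r'')
    (hkc : ∀ a, 1 ≤ a → a ≤ m₁' → k a = k 1)
    (hlc : ∀ a, 1 ≤ a → a ≤ m₁'' → l a = l 1)
    (hk2 : k (m₂' + 1) = 0) (hl2 : l (m₂'' + 1) = 0)
    (z : ℂ) (q : ℕ) (hq1 : 2 ≤ q) (hq2 : q ≤ r' + r'' + 2)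
    (Hq : (∑ i ∈ Icc (max 1 (q - r'' - 1)) (min (q-1) (r'+1)),
            cnt z ((d:ℂ) * ((q:ℂ) - 2) / 2) (k i + l (q - i)))
        < cnt z ((d:ℂ) * ((q:ℂ) - 2) / 2) (phi0 r' r'' k l (q-1))
          + ∑ i ∈ Icc (max 1 (q - r'' - 1)) (min (q-1) (r'+1) - 1),
            cnt z ((d:ℂ) * ((q:ℂ) - 2) / 2) (k i + l (q - 1 - i))) :
    ∃ t : ℕ, z = (d:ℂ) * ((q:ℂ) - 2) / 2 - (t:ℂ) ∧
      t + 1 ≤ k 1 + l 1 ∧ k m₂' ≤ t ∧ l m₂'' ≤ t ∧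
      m₁' + 2 ≤ q ∧ m₁'' + 2 ≤ q ∧ q ≤ m₂' + m₂'' + 1 ∧ 1 ≤ k 1 ∧ 1 ≤ l 1 := by
  set κ : ℂ := (d:ℂ) * ((q:ℂ) - 2) / 2 with hκ
  set A : ℕ := max 1 (q - r'' - 1) with hA
  set B : ℕ := min (q-1) (r'+1) with hB
  have hAB : A ≤ B := by omega
  have hA1 : 1 ≤ A := by omega
  -- extract t
  have hex : ∃ t : ℕ, z = κ - (t:ℂ) := by
    by_cases h1 : 0 < cnt z κ (phi0 r' r'' k l (q-1))
    · obtain ⟨t, _, ht⟩ := cnt_pos _ _ _ h1; exact ⟨t, ht⟩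
    · have h2 : 0 < ∑ i ∈ Icc A (B-1), cnt z κ (k i + l (q - 1 - i)) := by omega
      obtain ⟨i, _, hi⟩ := sum_pos_witness h2
      obtain ⟨t, _, ht⟩ := cnt_pos _ _ _ hi; exact ⟨t, ht⟩
  obtain ⟨t, hzt⟩ := hex
  rw [hzt] at Hq
  rw [Finset.sum_congr rfl (fun i _ => cnt_eq_ite κ t (k i + l (q - i))),
      Finset.sum_congr rfl (fun i _ => cnt_eq_ite κ t (k i + l (q - 1 - i))),
      cnt_eq_ite] at Hq
  -- φ is a lower bound for all dd i
  have hphile : ∀ i, A ≤ i → i ≤ B → phi0 r' r'' k l (q-1) ≤ k i + l (q - i) := by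
    intro i h1 h2
    exact phi0_le r' r'' k l (q-1) i (q-i) (by omega) (by omega) (by omega) (by omega) (by omega)
  -- rule out t < φ
  have htphi : ¬ t < phi0 r' r'' k l (q-1) := by
    intro hlt
    have hdd : ∀ i ∈ Icc A B, (if t < k i + l (q - i) then (1:ℕ) else 0) = 1 := by
      intro i hi
      rw [Finset.mem_Icc] at hi
      have := hphile i hi.1 hi.2
      rw [if_pos (by omega)]
    rw [Finset.sum_congr rfl hdd, Finset.sum_const, smul_eq_mul, mul_one, Nat.card_Icc] at Hq
    have hnn : (∑ i ∈ Icc A (B-1), if t < k i + l (q - 1 - i) then (1:ℕ) else 0)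
        ≤ ∑ i ∈ Icc A (B-1), 1 := Finset.sum_le_sum (fun i _ => by split <;> omega)
    rw [Finset.sum_const, smul_eq_mul, mul_one, Nat.card_Icc] at hnn
    have : (if t < phi0 r' r'' k l (q-1) then (1:ℕ) else 0) ≤ 1 := by split <;> omega
    omega
  rw [if_neg htphi, Nat.zero_add] at Hq
  -- witnesses
  obtain ⟨i₁, i₂, hi1A, hi12, hi2B, hd1, hn1, hd2, hn2⟩ :=
    witness_lemma (fun i => k i + l (q - i)) (fun i => k i + l (q - 1 - i)) hA1 Hq
  -- basic ranges
  have hi2r : i₂ ≤ r' := by omega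
  have hi1r : i₁ ≤ r' := by omega
  have hj1r : q - 1 - i₁ ≤ r'' := by omega
  have hj2pos : 1 ≤ q - 1 - i₂ := by omega
  have hqi1 : q - i₁ = (q - 1 - i₁) + 1 := by omega
  have hqi2 : q - (i₂ + 1) = q - 1 - i₂ := by omega
  rw [hqi1] at hd1
  rw [hqi2] at hd2
  set j₁ := q - 1 - i₁ with hj1
  set j₂ := q - 1 - i₂ with hj2
  -- strict drops
  have hldrop : l (j₁ + 1) < l j₁ := by omega
  have hkdrop : k (i₂ + 1) < k i₂ := by omega
  -- position bounds
  have hm1i2 : m₁' ≤ i₂ := by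
    by_contra hcon
    have e1 := hkc i₂ (by omega) (by omega)
    have e2 := hkc (i₂+1) (by omega) (by omega)
    omega
  have hi2m2 : i₂ ≤ m₂' := by
    by_contra hcon
    rcases Nat.eq_or_lt_of_le (show m₂' + 1 ≤ i₂ by omega) with he | hlt
    · rw [← he] at hkdrop; omega
    · have := hk (m₂'+1) i₂ (by omega) (by omega) (by omega)
      omega
  have hm1j1 : m₁'' ≤ j₁ := by
    by_contra hcon
    have e1 := hlc j₁ (by omega) (by omega)
    have e2 := hlc (j₁+1) (by omega) (by omega)
    omega
  have hj1m2 : j₁ ≤ m₂'' := by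
    by_contra hcon
    rcases Nat.eq_or_lt_of_le (show m₂'' + 1 ≤ j₁ by omega) with he | hlt
    · rw [← he] at hldrop; omega
    · have := hl (m₂''+1) j₁ (by omega) (by omega) (by omega)
      omega
  -- value bounds
  have hk1 : k i₁ ≤ k 1 := hk 1 i₁ le_rfl (by omega) hi1r
  have hl1 : l j₁ ≤ l 1 := hl 1 j₁ le_rfl (by omega) hj1r
  have hkm2 : k m₂' ≤ k i₁ := hk i₁ m₂' (by omega) (by omega) hm3'
  have hlm2 : l m₂'' ≤ l j₂ := hl j₂ m₂'' (by omega) (by omega) hm3''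
  have hk1pos : 1 ≤ k 1 := by
    have := hk 1 i₂ le_rfl (by omega) hi2r
    omega
  have hl1pos : 1 ≤ l 1 := by omega
  refine ⟨t, hzt, by omega, by omega, by omega, by omega, by omega, by omega, hk1pos, hl1pos⟩

lemma denom0_ne_zero (d r' r'' : ℕ) (k l : ℕ → ℕ) : denom0 d r' r'' k l ≠ 0 :=
  Finset.prod_ne_zero_iff.mpr fun i _ =>
    Finset.prod_ne_zero_iff.mpr fun j _ => pochPoly_ne_zero _ _

lemma numer0_ne_zero (d r' r'' : ℕ) (k l : ℕ → ℕ) : numer0 d r' r'' k l ≠ 0 :=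
  Finset.prod_ne_zero_iff.mpr fun i _ =>
    Finset.prod_ne_zero_iff.mpr fun j _ => pochPoly_ne_zero _ _

lemma phiPoly0_ne_zero (d r' r'' : ℕ) (k l : ℕ → ℕ) : phiPoly0 d r' r'' k l ≠ 0 :=
  Finset.prod_ne_zero_iff.mpr fun a _ => pochPoly_ne_zero _ _

lemma denom0_monic (d r' r'' : ℕ) (k l : ℕ → ℕ) : (denom0 d r' r'' k l).Monic :=
  monic_prod_of_monic _ _ fun i _ => monic_prod_of_monic _ _ fun j _ => pochPoly_monic _ _

lemma numer0_monic (d r' r'' : ℕ) (k l : ℕ → ℕ) : (numer0 d r' r'' k l).Monic :=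
  monic_prod_of_monic _ _ fun i _ => monic_prod_of_monic _ _ fun j _ => pochPoly_monic _ _

lemma phiPoly0_monic (d r' r'' : ℕ) (k l : ℕ → ℕ) : (phiPoly0 d r' r'' k l).Monic :=
  monic_prod_of_monic _ _ fun a _ => pochPoly_monic _ _

lemma rm_denom (d r' r'' : ℕ) (k l : ℕ → ℕ) (z : ℂ) :
    rootMultiplicity z (denom0 d r' r'' k l)
      = ∑ q ∈ Icc 2 (r'+r''+2), ∑ i ∈ Icc (max 1 (q - r'' - 1)) (min (q-1) (r'+1)),
          cnt z ((d:ℂ) * ((q:ℂ) - 2) / 2) (k i + l (q - i)) := by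
  unfold denom0
  rw [rootMult_prod _ _ (fun i _ => Finset.prod_ne_zero_iff.mpr fun j _ => pochPoly_ne_zero _ _)]
  rw [Finset.sum_congr rfl (fun i _ => rootMult_prod _ _ (fun j _ => pochPoly_ne_zero _ _) z)]
  rw [Finset.sum_congr rfl (fun i _ => Finset.sum_congr rfl (fun j _ => rootMult_pochPoly z _ _))]
  rw [diag_sum (r'+1) (r''+1) 0
      (fun i j => cnt z ((d:ℂ) * ((i:ℂ) + (j:ℂ) - 2) / 2) (k i + l j))
      (Icc 2 (r'+r''+2)) (by intro i j h1 h2 h3 h4; simp only [Finset.mem_Icc]; omega)]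
  refine Finset.sum_congr rfl fun q hq => ?_
  rw [Finset.mem_Icc] at hq
  have hr1 : max 1 (q - 0 - (r''+1)) = max 1 (q - r'' - 1) := by omega
  have hr2 : min (q - 0 - 1) (r'+1) = min (q-1) (r'+1) := by omega
  rw [hr1, hr2]
  refine Finset.sum_congr rfl fun i hi => ?_
  rw [Finset.mem_Icc] at hi
  have hiq : i ≤ q := by omega
  have h0 : q - 0 - i = q - i := by omega
  rw [h0]
  congr 1
  have : ((q - i : ℕ) : ℂ) = (q:ℂ) - (i:ℂ) := by
    push_cast [Nat.cast_sub hiq]; ring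
  rw [this]; ring

lemma rm_numer (d r' r'' : ℕ) (k l : ℕ → ℕ) (z : ℂ) :
    rootMultiplicity z (numer0 d r' r'' k l)
      = ∑ q ∈ Icc 2 (r'+r''+2), ∑ i ∈ Icc (max 1 (q - r'' - 1)) (min (q-1) (r'+1) - 1),
          cnt z ((d:ℂ) * ((q:ℂ) - 2) / 2) (k i + l (q - 1 - i)) := by
  unfold numer0
  rw [rootMult_prod _ _ (fun i _ => Finset.prod_ne_zero_iff.mpr fun j _ => pochPoly_ne_zero _ _)]
  rw [Finset.sum_congr rfl (fun i _ => rootMult_prod _ _ (fun j _ => pochPoly_ne_zero _ _) z)]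
  rw [Finset.sum_congr rfl (fun i _ => Finset.sum_congr rfl (fun j _ => rootMult_pochPoly z _ _))]
  rw [diag_sum r' r'' 1
      (fun i j => cnt z ((d:ℂ) * ((i:ℂ) + (j:ℂ) - 1) / 2) (k i + l j))
      (Icc 2 (r'+r''+2)) (by intro i j h1 h2 h3 h4; simp only [Finset.mem_Icc]; omega)]
  refine Finset.sum_congr rfl fun q hq => ?_
  rw [Finset.mem_Icc] at hq
  have hr1 : max 1 (q - 1 - r'') = max 1 (q - r'' - 1) := by omega
  have hr2 : min (q - 1 - 1) r' = min (q-1) (r'+1) - 1 := by omega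
  rw [hr1, hr2]
  refine Finset.sum_congr rfl fun i hi => ?_
  rw [Finset.mem_Icc] at hi
  have hiq : i + 1 ≤ q := by omega
  congr 1
  have : ((q - 1 - i : ℕ) : ℂ) = (q:ℂ) - 1 - (i:ℂ) := by
    have e : q - 1 - i = q - (1 + i) := by omega
    rw [e, Nat.cast_sub (by omega)]
    push_cast; ring
  rw [this]; ring

lemma rm_phi (d r' r'' : ℕ) (k l : ℕ → ℕ) (hk0 : k (r'+1) = 0) (hl0 : l (r''+1) = 0) (z : ℂ) :
    rootMultiplicity z (phiPoly0 d r' r'' k l)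
      = ∑ q ∈ Icc 2 (r'+r''+2),
          cnt z ((d:ℂ) * ((q:ℂ) - 2) / 2) (phi0 r' r'' k l (q-1)) := by
  unfold phiPoly0
  rw [rootMult_prod _ _ (fun a _ => pochPoly_ne_zero _ _)]
  rw [Finset.sum_congr rfl (fun a _ => rootMult_pochPoly z _ _)]
  have htop : (r'+r''+2) = (r'+r''+1) + 1 := rfl
  have e1 : ∑ q ∈ Icc 2 (r'+r''+2),
        cnt z ((d:ℂ) * ((q:ℂ) - 2) / 2) (phi0 r' r'' k l (q-1))
      = (∑ q ∈ Icc 2 (r'+r''+1),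
        cnt z ((d:ℂ) * ((q:ℂ) - 2) / 2) (phi0 r' r'' k l (q-1)))
        + cnt z ((d:ℂ) * (((r'+r''+2 : ℕ):ℂ) - 2) / 2) (phi0 r' r'' k l (r'+r''+1)) := by
    have h2 : Icc 2 (r'+r''+2) = Ico 2 (r'+r''+3) := by
      ext x; simp only [Finset.mem_Icc, Finset.mem_Ico]; omega
    have h3 : Icc 2 (r'+r''+1) = Ico 2 (r'+r''+2) := by
      ext x; simp only [Finset.mem_Icc, Finset.mem_Ico]; omega
    rw [h2, h3]
    have := Finset.sum_Ico_succ_top (a := 2) (b := r'+r''+2) (by omega)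
      (fun q => cnt z ((d:ℂ) * ((q:ℂ) - 2) / 2) (phi0 r' r'' k l (q-1)))
    rw [this]
    congr 2
  rw [e1, phi0_top r' r'' k l hk0 hl0, cnt_zero, add_zero]
  have e2 : ∑ a ∈ Icc 1 (r'+r''), cnt z ((d:ℂ) * (((a+1 : ℕ):ℂ) - 2) / 2) (phi0 r' r'' k l ((a+1)-1))
      = ∑ q ∈ Icc 2 (r'+r''+1), cnt z ((d:ℂ) * ((q:ℂ) - 2) / 2) (phi0 r' r'' k l (q-1)) := by
    exact sum_Icc_shift (fun q => cnt z ((d:ℂ) * ((q:ℂ) - 2) / 2) (phi0 r' r'' k l (q-1))) 1 (r'+r'')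
  rw [← e2]
  refine Finset.sum_congr rfl fun a ha => ?_
  have h4 : (a+1) - 1 = a := by omega
  rw [h4]
  congr 1
  push_cast
  ring

lemma sum_Icc_split2 {M : Type*} [AddCommMonoid M] (f : ℕ → M) (a b p : ℕ)
    (ha : 1 ≤ a) (h1 : a ≤ p) (h2 : p ≤ b + 1) :
    ∑ i ∈ Icc a b, f i = (∑ i ∈ Icc a (p-1), f i) + ∑ i ∈ Icc p b, f i := by
  have e1 : Icc a (p-1) = Ico a p := by
    ext x; simp only [Finset.mem_Icc, Finset.mem_Ico]; omega
  have e2 : Icc p b = Ico p (b+1) := by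
    ext x; simp only [Finset.mem_Icc, Finset.mem_Ico]; omega
  have e3 : Icc a b = Ico a (b+1) := by
    ext x; simp only [Finset.mem_Icc, Finset.mem_Ico]; omega
  rw [e1, e2, e3, Finset.sum_Ico_consecutive f (by omega : a ≤ p) (by omega : p ≤ b+1)]

lemma kzero_mono (r' : ℕ) (k : ℕ → ℕ)
    (hk : ∀ i j, 1 ≤ i → i ≤ j → j ≤ r' → k j ≤ k i) (hk0 : k (r' + 1) = 0)
    (p q : ℕ) (hp : 1 ≤ p) (hpq : p ≤ q) (hq : q ≤ r' + 1) (h : k p = 0) : k q = 0 := by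
  rcases Nat.eq_or_lt_of_le hq with he | hlt
  · rw [he]; exact hk0
  · have := hk p q hp hpq (by omega)
    omega

lemma cnt_far_zero (d mz q : ℕ) (hd : 1 ≤ d) (hq : 2 ≤ q) (hmz : q - 2 < mz) (w : ℕ) :
    cnt ((d:ℂ) * (mz:ℂ) / 2) ((d:ℂ) * ((q:ℂ) - 2) / 2) w = 0 := by
  by_contra hc
  obtain ⟨t, _, ht⟩ := cnt_pos _ _ _ (Nat.pos_of_ne_zero hc)
  have h2 : ((2*t + d*mz : ℕ) : ℂ) = ((d*(q-2) : ℕ) : ℂ) := by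
    push_cast [Nat.cast_sub hq]
    linear_combination 2 * ht
  have h3 : 2*t + d*mz = d*(q-2) := Nat.cast_injective h2
  have h5 : d * ((q-2)+1) ≤ d * mz := Nat.mul_le_mul_left d (by omega)
  rw [Nat.mul_add, Nat.mul_one] at h5
  omega

/-- cancellation along a diagonal `q` which contains a pair with `k i₀ = l (q - i₀) = 0`. -/
lemma cancel_q (d r' r'' : ℕ) (k l : ℕ → ℕ)
    (hk : ∀ i j, 1 ≤ i → i ≤ j → j ≤ r' → k j ≤ k i) (hk0 : k (r' + 1) = 0)
    (hl : ∀ i j, 1 ≤ i → i ≤ j → j ≤ r'' → l j ≤ l i) (hl0 : l (r'' + 1) = 0)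
    (z : ℂ) (q i₀ : ℕ) (hq1 : 2 ≤ q) (hq2 : q ≤ r' + r'' + 2)
    (hi₀A : max 1 (q - r'' - 1) ≤ i₀) (hi₀B : i₀ ≤ min (q-1) (r'+1))
    (hki₀ : k i₀ = 0) (hlj₀ : l (q - i₀) = 0) :
    ∑ i ∈ Icc (max 1 (q - r'' - 1)) (min (q-1) (r'+1) - 1),
        cnt z ((d:ℂ) * ((q:ℂ) - 2) / 2) (k i + l (q - 1 - i))
      = ∑ i ∈ Icc (max 1 (q - r'' - 1)) (min (q-1) (r'+1)),
        cnt z ((d:ℂ) * ((q:ℂ) - 2) / 2) (k i + l (q - i)) := by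
  set κ : ℂ := (d:ℂ) * ((q:ℂ) - 2) / 2
  set A : ℕ := max 1 (q - r'' - 1) with hA
  set B : ℕ := min (q-1) (r'+1) with hB
  have hA1 : 1 ≤ A := by omega
  have hAB : A ≤ B := by omega
  -- right-hand side: split at i₀
  rw [sum_Icc_split (fun i => cnt z κ (k i + l (q - i))) A B i₀ hA1 hi₀A hi₀B]
  have hmid : cnt z κ (k i₀ + l (q - i₀)) = 0 := by
    rw [hki₀, hlj₀, cnt_zero]
  rw [hmid, zero_add]
  -- left-hand side: split at i₀ (two ranges)
  rw [sum_Icc_split2 (fun i => cnt z κ (k i + l (q - 1 - i))) A (B-1) i₀ hA1 hi₀A (by omega)]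
  congr 1
  · -- low range: i ≤ i₀ - 1, both l-values vanish
    refine Finset.sum_congr rfl fun i hi => ?_
    rw [Finset.mem_Icc] at hi
    have hl1 : l (q - 1 - i) = 0 := by
      refine kzero_mono r'' l hl hl0 (q - i₀) (q - 1 - i) (by omega) (by omega) (by omega) hlj₀
    have hl2 : l (q - i) = 0 := by
      refine kzero_mono r'' l hl hl0 (q - i₀) (q - i) (by omega) (by omega) (by omega) hlj₀
    rw [hl1, hl2]
  · -- high range: i ≥ i₀, k-values vanish; reindex
    have hBB : B - 1 + 1 = B := by omega
    have hshift := sum_Icc_shift (fun i => cnt z κ (k i + l (q - i))) i₀ (B-1)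
    rw [hBB] at hshift
    rw [← hshift]
    refine Finset.sum_congr rfl fun i hi => ?_
    rw [Finset.mem_Icc] at hi
    have hk1 : k i = 0 := kzero_mono r' k hk hk0 i₀ i (by omega) (by omega) (by omega) hki₀
    have hk2 : k (i+1) = 0 := kzero_mono r' k hk hk0 i₀ (i+1) (by omega) (by omega) (by omega) hki₀
    have he : q - (i+1) = q - 1 - i := by omega
    rw [hk1, hk2, he]

lemma root_pipeline (d r' r'' : ℕ) (hd : 0 < d) (hr' : 0 < r') (hr'' : 0 < r'')
    (k l : ℕ → ℕ)
    (hk : ∀ i j, 1 ≤ i → i ≤ j → j ≤ r' → k j ≤ k i) (hk0 : k (r' + 1) = 0)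
    (hl : ∀ i j, 1 ≤ i → i ≤ j → j ≤ r'' → l j ≤ l i) (hl0 : l (r'' + 1) = 0)
    (m₁' m₂' m₁'' m₂'' : ℕ)
    (hm1' : 1 ≤ m₁') (hm2' : m₁' ≤ m₂') (hm3' : m₂' ≤ r')
    (hm1'' : 1 ≤ m₁'') (hm2'' : m₁'' ≤ m₂'') (hm3'' : m₂'' ≤ r'')
    (hkc : ∀ a, 1 ≤ a → a ≤ m₁' → k a = k 1)
    (hlc : ∀ a, 1 ≤ a → a ≤ m₁'' → l a = l 1)
    (hk2 : k (m₂' + 1) = 0) (hl2 : l (m₂'' + 1) = 0)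
    (R : Polynomial ℂ)
    (hR : R * denom0 d r' r'' k l = phiPoly0 d r' r'' k l * numer0 d r' r'' k l)
    (z : ℂ) (hz : R.IsRoot z) :
    ∃ q t : ℕ, 2 ≤ q ∧ z = (d:ℂ) * ((q:ℂ) - 2) / 2 - (t:ℂ) ∧
      t + 1 ≤ k 1 + l 1 ∧ k m₂' ≤ t ∧ l m₂'' ≤ t ∧
      m₁' + 2 ≤ q ∧ m₁'' + 2 ≤ q ∧ q ≤ m₂' + m₂'' + 1 ∧ 1 ≤ k 1 ∧ 1 ≤ l 1 := by
  have hden := denom0_ne_zero d r' r'' k l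
  have hnum := numer0_ne_zero d r' r'' k l
  have hphi := phiPoly0_ne_zero d r' r'' k l
  have hRne : R ≠ 0 := by
    intro h
    rw [h, zero_mul] at hR
    exact (mul_ne_zero hphi hnum) hR.symm
  have heq : rootMultiplicity z (R * denom0 d r' r'' k l)
      = rootMultiplicity z (phiPoly0 d r' r'' k l * numer0 d r' r'' k l) := by rw [hR]
  rw [Polynomial.rootMultiplicity_mul (mul_ne_zero hRne hden),
      Polynomial.rootMultiplicity_mul (mul_ne_zero hphi hnum),
      rm_denom, rm_numer, rm_phi d r' r'' k l hk0 hl0] at heq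
  have hpos : 0 < rootMultiplicity z R := (Polynomial.rootMultiplicity_pos hRne).mpr hz
  have hexq : ∃ q ∈ Icc 2 (r'+r''+2),
      (∑ i ∈ Icc (max 1 (q - r'' - 1)) (min (q-1) (r'+1)),
        cnt z ((d:ℂ) * ((q:ℂ) - 2) / 2) (k i + l (q - i)))
      < cnt z ((d:ℂ) * ((q:ℂ) - 2) / 2) (phi0 r' r'' k l (q-1))
        + ∑ i ∈ Icc (max 1 (q - r'' - 1)) (min (q-1) (r'+1) - 1),
        cnt z ((d:ℂ) * ((q:ℂ) - 2) / 2) (k i + l (q - 1 - i)) := by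
    by_contra hc
    push_neg at hc
    have hle : ∑ q ∈ Icc 2 (r'+r''+2),
        (cnt z ((d:ℂ) * ((q:ℂ) - 2) / 2) (phi0 r' r'' k l (q-1))
          + ∑ i ∈ Icc (max 1 (q - r'' - 1)) (min (q-1) (r'+1) - 1),
            cnt z ((d:ℂ) * ((q:ℂ) - 2) / 2) (k i + l (q - 1 - i)))
        ≤ ∑ q ∈ Icc 2 (r'+r''+2),
        ∑ i ∈ Icc (max 1 (q - r'' - 1)) (min (q-1) (r'+1)),
            cnt z ((d:ℂ) * ((q:ℂ) - 2) / 2) (k i + l (q - i)) :=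
      Finset.sum_le_sum hc
    rw [Finset.sum_add_distrib] at hle
    omega
  obtain ⟨q, hqm, hq⟩ := hexq
  rw [Finset.mem_Icc] at hqm
  obtain ⟨t, h1, h2, h3, h4, h5, h6, h7, h8, h9⟩ :=
    core_diag d r' r'' k l hk hk0 hl hl0 m₁' m₂' m₁'' m₂''
      hm1' hm2' hm3' hm1'' hm2'' hm3'' hkc hlc hk2 hl2 z q hqm.1 hqm.2 hq
  exact ⟨q, t, hqm.1, h1, h2, h3, h4, h5, h6, h7, h8, h9⟩

lemma strict_at_m (d r' r'' : ℕ) (k l : ℕ → ℕ) (hd : 0 < d) (m : ℕ)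
    (hphim : phi0 r' r'' k l m ≠ 0) (hm : 1 ≤ m) (hmu : m + 1 ≤ r' + r'' + 2) :
    ∑ i ∈ Icc (max 1 ((m+1) - r'' - 1)) (min ((m+1)-1) (r'+1) - 1),
        cnt ((d:ℂ) * (((m-1 : ℕ)):ℂ) / 2) ((d:ℂ) * (((m+1 : ℕ):ℂ) - 2) / 2) (k i + l ((m+1) - 1 - i))
      < ∑ i ∈ Icc (max 1 ((m+1) - r'' - 1)) (min ((m+1)-1) (r'+1)),
        cnt ((d:ℂ) * (((m-1 : ℕ)):ℂ) / 2) ((d:ℂ) * (((m+1 : ℕ):ℂ) - 2) / 2) (k i + l ((m+1) - i)) := by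
  have hz : (d:ℂ) * (((m-1 : ℕ)):ℂ) / 2 = (d:ℂ) * (((m+1 : ℕ):ℂ) - 2) / 2 := by
    push_cast [Nat.cast_sub hm]
    ring
  rw [hz]
  set κ : ℂ := (d:ℂ) * (((m+1 : ℕ):ℂ) - 2) / 2
  set A : ℕ := max 1 ((m+1) - r'' - 1) with hA
  set B : ℕ := min ((m+1)-1) (r'+1) with hB
  have hAB : A ≤ B := by omega
  have hA1 : 1 ≤ A := by omega
  have hRHS : ∑ i ∈ Icc A B, cnt κ κ (k i + l ((m+1) - i)) = B + 1 - A := by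
    rw [Finset.sum_congr rfl (fun i hi => ?_), Finset.sum_const, smul_eq_mul, mul_one,
      Nat.card_Icc]
    rw [Finset.mem_Icc] at hi
    have hle : phi0 r' r'' k l m ≤ k i + l ((m+1) - i) :=
      phi0_le r' r'' k l m i ((m+1)-i) (by omega) (by omega) (by omega) (by omega) (by omega)
    exact cnt_self κ _ (by omega)
  have hLHS : (∑ i ∈ Icc A (B-1), cnt κ κ (k i + l ((m+1) - 1 - i))) ≤ B - A := by
    calc (∑ i ∈ Icc A (B-1), cnt κ κ (k i + l ((m+1) - 1 - i)))
        ≤ ∑ i ∈ Icc A (B-1), 1 := Finset.sum_le_sum fun i _ => cnt_le_one _ _ _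
      _ = B - A := by rw [Finset.sum_const, smul_eq_mul, mul_one, Nat.card_Icc]; omega
  omega

end ZeroesNonsimpleAux

/-- Proposition 5.4: location of the zeros of `(λ)_{φ₀(k,l),d}·C₀^d(λ,k,l)`, and the
poles/nonvanishing of `C₀^d` at `λ = dm/2`, `d(m−1)/2`. -/
theorem zeroes_nonsimple (d r' r'' : ℕ) (hd : 0 < d) (hr' : 0 < r') (hr'' : 0 < r'')
    (k l : ℕ → ℕ)
    (hk : ∀ i j, 1 ≤ i → i ≤ j → j ≤ r' → k j ≤ k i) (hk0 : k (r' + 1) = 0)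
    (hl : ∀ i j, 1 ≤ i → i ≤ j → j ≤ r'' → l j ≤ l i) (hl0 : l (r'' + 1) = 0)
    (m₁' m₂' m₁'' m₂'' : ℕ)
    (hm1' : 1 ≤ m₁') (hm2' : m₁' ≤ m₂') (hm3' : m₂' ≤ r')
    (hm1'' : 1 ≤ m₁'') (hm2'' : m₁'' ≤ m₂'') (hm3'' : m₂'' ≤ r'')
    (hkc : ∀ a, 1 ≤ a → a ≤ m₁' → k a = k 1)
    (hlc : ∀ a, 1 ≤ a → a ≤ m₁'' → l a = l 1)
    (hk2 : k (m₂' + 1) = 0) (hl2 : l (m₂'' + 1) = 0)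
    (R : Polynomial ℂ)
    (hR : R * denom0 d r' r'' k l = phiPoly0 d r' r'' k l * numer0 d r' r'' k l) :
    ((1 ≤ k 1 → 1 ≤ l 1 → ∀ z : ℂ, R.IsRoot z → z.im = 0 ∧
        (d : ℝ) / 2 * (max m₁' m₁'' : ℕ) - ((k 1 : ℝ) + (l 1 : ℝ)) + 1 ≤ z.re ∧
        z.re ≤ (d : ℝ) / 2 * ((m₂' : ℝ) + (m₂'' : ℝ) - 1) - (max (k m₂') (l m₂'') : ℕ)) ∧
      (k 1 = 0 ∨ l 1 = 0 → R = 1)) ∧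
    ∀ m : ℕ, 1 ≤ m → m ≤ r' + r'' - 1 →
      phi0 r' r'' k l (m + 1) = 0 → phi0 r' r'' k l m ≠ 0 →
      (Polynomial.rootMultiplicity ((d : ℂ) * (m : ℂ) / 2) (numer0 d r' r'' k l) =
        Polynomial.rootMultiplicity ((d : ℂ) * (m : ℂ) / 2) (denom0 d r' r'' k l) ∧
       Polynomial.rootMultiplicity ((d : ℂ) * ((m : ℂ) - 1) / 2) (numer0 d r' r'' k l) <
        Polynomial.rootMultiplicity ((d : ℂ) * ((m : ℂ) - 1) / 2) (denom0 d r' r'' k l)) := by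
  constructor
  · constructor
    · -- part (i)
      intro _ _ z hz
      obtain ⟨q, t, hq2, hzt, h3, h4, h5, h6, h7, h8, _, _⟩ :=
        root_pipeline d r' r'' hd hr' hr'' k l hk hk0 hl hl0 m₁' m₂' m₁'' m₂''
          hm1' hm2' hm3' hm1'' hm2'' hm3'' hkc hlc hk2 hl2 R hR z hz
      have hzS : z = Complex.ofReal ((d:ℝ) * ((q:ℝ) - 2) / 2 - (t:ℝ)) := by
        rw [hzt]; push_cast; ring
      have him : z.im = 0 := by rw [hzS]; exact Complex.ofReal_im _
      have hre : z.re = (d:ℝ) * ((q:ℝ) - 2) / 2 - (t:ℝ) := by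
        rw [hzS]; exact Complex.ofReal_re _
      refine ⟨him, ?_, ?_⟩
      · -- lower bound
        rw [hre]
        have hmx : (max m₁' m₁'') + 2 ≤ q := by omega
        have h1R : ((max m₁' m₁'' : ℕ) : ℝ) ≤ (q:ℝ) - 2 := by
          have := (Nat.cast_le (α := ℝ)).mpr hmx
          push_cast at this
          push_cast
          linarith
        have h2R : (d:ℝ)/2 * ((max m₁' m₁'' : ℕ) : ℝ) ≤ (d:ℝ)/2 * ((q:ℝ) - 2) :=
          mul_le_mul_of_nonneg_left h1R (by positivity)
        have h3R : (t:ℝ) + 1 ≤ (k 1 : ℝ) + (l 1 : ℝ) := by exact_mod_cast h3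
        linarith
      · -- upper bound
        rw [hre]
        have hqu : (q:ℝ) - 2 ≤ (m₂' : ℝ) + (m₂'' : ℝ) - 1 := by
          have := (Nat.cast_le (α := ℝ)).mpr h8
          push_cast at this
          linarith
        have h2R : (d:ℝ)/2 * ((q:ℝ) - 2) ≤ (d:ℝ)/2 * ((m₂' : ℝ) + (m₂'' : ℝ) - 1) :=
          mul_le_mul_of_nonneg_left hqu (by positivity)
        have hM : ((max (k m₂') (l m₂'') : ℕ) : ℝ) ≤ (t:ℝ) := by
          have : max (k m₂') (l m₂'') ≤ t := by omega
          exact_mod_cast this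
        linarith
    · -- part (ii)
      intro h0
      have hnoroot : ∀ z : ℂ, ¬ R.IsRoot z := by
        intro z hz
        obtain ⟨q, t, _, _, _, _, _, _, _, _, hk1, hl1⟩ :=
          root_pipeline d r' r'' hd hr' hr'' k l hk hk0 hl hl0 m₁' m₂' m₁'' m₂''
            hm1' hm2' hm3' hm1'' hm2'' hm3'' hkc hlc hk2 hl2 R hR z hz
        rcases h0 with h | h <;> omega
      have hmon : (R * denom0 d r' r'' k l).Monic := by
        rw [hR]; exact (phiPoly0_monic d r' r'' k l).mul (numer0_monic d r' r'' k l)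
      rw [mul_comm] at hmon
      have hmonR : R.Monic := (denom0_monic d r' r'' k l).of_mul_monic_left hmon
      have hdeg : R.natDegree = 0 := by
        by_contra hne
        have hpos : 0 < R.natDegree := Nat.pos_of_ne_zero hne
        obtain ⟨z, hz⟩ := Complex.exists_root (natDegree_pos_iff_degree_pos.mp hpos)
        exact hnoroot z hz
      exact hmonR.natDegree_eq_zero.mp hdeg
  · -- part B
    intro m hm1 hm2 hphi1 hphim
    have hm3 : m + 1 ≤ r' + r'' := by omega
    obtain ⟨is, js, hi1, hi2, hj1, hj2, hijsum, hki, hlj⟩ :=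
      phi0_zero_witness r' r'' k l (m+1) (by omega) (by omega) hphi1
    -- the cancellation, for every diagonal q ≥ m+2 and any z
    have hcancel : ∀ (z : ℂ) (q : ℕ), m + 2 ≤ q → q ≤ r' + r'' + 2 →
        (∑ i ∈ Icc (max 1 (q - r'' - 1)) (min (q-1) (r'+1) - 1),
          cnt z ((d:ℂ) * ((q:ℂ) - 2) / 2) (k i + l (q - 1 - i)))
        = ∑ i ∈ Icc (max 1 (q - r'' - 1)) (min (q-1) (r'+1)),
          cnt z ((d:ℂ) * ((q:ℂ) - 2) / 2) (k i + l (q - i)) := by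
      intro z q hqa hqb
      refine cancel_q d r' r'' k l hk hk0 hl hl0 z q (min (is + (q - (m+2))) (r'+1))
        (by omega) (by omega) (by omega) (by omega) ?_ ?_
      · exact kzero_mono r' k hk hk0 is _ hi1 (by omega) (by omega) hki
      · exact kzero_mono r'' l hl hl0 js _ hj1 (by omega) (by omega) hlj
    constructor
    · -- equality at d*m/2
      rw [rm_numer, rm_denom]
      refine Finset.sum_congr rfl fun q hq => ?_
      rw [Finset.mem_Icc] at hq
      by_cases hcase : m + 2 ≤ q
      · exact hcancel _ q hcase hq.2
      · rw [Finset.sum_eq_zero fun i _ => cnt_far_zero d m q hd hq.1 (by omega) _,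
            Finset.sum_eq_zero fun i _ => cnt_far_zero d m q hd hq.1 (by omega) _]
    · -- strict inequality at d*(m-1)/2
      have hz2 : (d:ℂ) * ((m:ℂ) - 1) / 2 = (d:ℂ) * (((m-1 : ℕ) : ℂ)) / 2 := by
        rw [Nat.cast_sub hm1]; push_cast; ring
      rw [hz2, rm_numer, rm_denom]
      refine Finset.sum_lt_sum ?_ ⟨m+1, by rw [Finset.mem_Icc]; omega, ?_⟩
      · intro q hq
        rw [Finset.mem_Icc] at hq
        by_cases hcase : m + 2 ≤ q
        · exact le_of_eq (hcancel _ q hcase hq.2)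
        · by_cases hcase2 : q = m + 1
          · subst hcase2
            exact le_of_lt (strict_at_m d r' r'' k l hd m hphim (by omega) (by omega))
          · rw [Finset.sum_eq_zero fun i _ => cnt_far_zero d (m-1) q hd hq.1 (by omega) _]
            exact Nat.zero_le _
      · exact strict_at_m d r' r'' k l hd m hphim (by omega) (by omega)
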